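/- Let m1, m2 be positive integers with m2 even. The set of spherical Lissajous nodes LS(m) = {x_i : i ∈ I(m)}, where x_i = (sin(i1π/m1)cos(i2π/m2), sin(i1π/m1)sin(i2π/m2), cos(i1π/m1)), has exactly (m1 − 1) m2 + 2 elements. -/

import Mathlib

open Real

/-- The index set I(m) as a finset. -/
def indexSet (m1 m2 : ℕ) : Finset (ℕ × ℕ) :=
  (Finset.range (m1 + 1) ×ˢ Finset.range (2 * m2)).filter
    (fun i => ((i.1 = 0 ∨ i.1 = m1) → i.2 < m2) ∧ Even (i.1 + i.2))

/-- The spherical Lissajous node corresponding to an index. -/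
noncomputable def node (m1 m2 : ℕ) (i : ℕ × ℕ) : ℝ × ℝ × ℝ :=
  (Real.sin (i.1 * π / m1) * Real.cos (i.2 * π / m2),
   Real.sin (i.1 * π / m1) * Real.sin (i.2 * π / m2),
   Real.cos (i.1 * π / m1))

lemma angle_eq (x y : ℝ) (hc : Real.cos x = Real.cos y) (hs : Real.sin x = Real.sin y) :
    ∃ n : ℤ, x = y + n * (2 * π) := by
  have h : Complex.exp (x * Complex.I) = Complex.exp (y * Complex.I) := by
    rw [Complex.exp_mul_I, Complex.exp_mul_I, ← Complex.ofReal_cos, ← Complex.ofReal_cos,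
      ← Complex.ofReal_sin, ← Complex.ofReal_sin, hc, hs]
  obtain ⟨n, hn⟩ := Complex.exp_eq_exp_iff_exists_int.mp h
  refine ⟨n, ?_⟩
  have hn' : (x : ℂ) * Complex.I = ((y : ℂ) + n * (2 * π)) * Complex.I := by rw [hn]; ring
  have := mul_right_cancel₀ Complex.I_ne_zero hn'
  exact_mod_cast this

lemma card_parity (a n : ℕ) :
    ((Finset.range (2 * n)).filter (fun k => Even (a + k))).card = n := by
  have h : (Finset.range (2 * n)).filter (fun k => Even (a + k)) =
      (Finset.range n).image (fun j => 2 * j + a % 2) := by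
    ext k
    simp only [Finset.mem_filter, Finset.mem_range, Finset.mem_image, Nat.even_iff]
    constructor
    · rintro ⟨hk, he⟩
      exact ⟨(k - a % 2) / 2, by omega, by omega⟩
    · rintro ⟨j, hj, rfl⟩
      omega
  rw [h, Finset.card_image_of_injective _ (fun a b h => by omega), Finset.card_range]

/-- The representative finset. -/
def repSet (m1 m2 : ℕ) : Finset (ℕ × ℕ) :=
  ((Finset.Ioo 0 m1 ×ˢ Finset.range (2 * m2)).filter (fun i => Even (i.1 + i.2)))
    ∪ {(0, 0), (m1, m1 % 2)}

lemma repSet_card (m1 m2 : ℕ) (hm1 : 0 < m1) (hm2 : 0 < m2) :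
    (repSet m1 m2).card = (m1 - 1) * m2 + 2 := by
  have hdisj : Disjoint
      ((Finset.Ioo 0 m1 ×ˢ Finset.range (2 * m2)).filter (fun i => Even (i.1 + i.2)))
      ({(0, 0), (m1, m1 % 2)} : Finset (ℕ × ℕ)) := by
    rw [Finset.disjoint_right]
    rintro ⟨a, b⟩ hab h
    simp only [Finset.mem_insert, Finset.mem_singleton, Prod.mk.injEq] at hab
    simp only [Finset.mem_filter, Finset.mem_product, Finset.mem_Ioo] at h
    omega
  rw [repSet, Finset.card_union_of_disjoint hdisj]
  have h2 : ({(0, 0), (m1, m1 % 2)} : Finset (ℕ × ℕ)).card = 2 := by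
    rw [Finset.card_insert_of_notMem (by simp [Prod.ext_iff]; omega), Finset.card_singleton]
  rw [h2]
  congr 1
  have hsplit : ((Finset.Ioo 0 m1 ×ˢ Finset.range (2 * m2)).filter (fun i => Even (i.1 + i.2)))
      = (Finset.Ioo 0 m1).biUnion (fun a =>
          ((Finset.range (2 * m2)).filter (fun k => Even (a + k))).image (fun k => (a, k))) := by
    ext ⟨a, b⟩
    simp only [Finset.mem_filter, Finset.mem_product, Finset.mem_biUnion, Finset.mem_image,
      Finset.mem_Ioo, Prod.mk.injEq]
    constructor
    · rintro ⟨⟨ha, hb⟩, he⟩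
      exact ⟨a, ha, b, ⟨by simpa using hb, he⟩, rfl, rfl⟩
    · rintro ⟨a', ha', b', hb', rfl, rfl⟩
      simp only [Finset.mem_filter, Finset.mem_range] at hb'
      exact ⟨⟨ha', by simpa using hb'.1⟩, hb'.2⟩
  rw [hsplit, Finset.card_biUnion]
  · rw [Finset.sum_congr rfl (fun a _ => by
      rw [Finset.card_image_of_injective _ (fun x y h => by simpa using h), card_parity])]
    rw [Finset.sum_const, Nat.card_Ioo, smul_eq_mul]
    simp
  · intro a _ b _ hab
    rw [Function.onFun, Finset.disjoint_left]
    rintro ⟨x, y⟩ hx hy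
    simp only [Finset.mem_image] at hx hy
    obtain ⟨_, _, h1⟩ := hx
    obtain ⟨_, _, h2⟩ := hy
    exact hab (by rw [Prod.mk.injEq] at h1 h2; omega)

lemma node_north (m1 m2 : ℕ) (i2 : ℕ) : node m1 m2 (0, i2) = (0, 0, 1) := by
  simp [node]

lemma node_south (m1 m2 : ℕ) (hm1 : 0 < m1) (i2 : ℕ) : node m1 m2 (m1, i2) = (0, 0, -1) := by
  have h : (m1 : ℝ) * π / m1 = π := by
    field_simp
  simp [node, h]

lemma mem_repSet (m1 m2 : ℕ) (hm1 : 0 < m1) (hm2 : 0 < m2) (i : ℕ × ℕ)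
    (hi : i ∈ repSet m1 m2) :
    i.1 ≤ m1 ∧ i.2 < 2 * m2 ∧ (i.1 = 0 → i = (0, 0)) ∧ (i.1 = m1 → i = (m1, m1 % 2)) := by
  simp only [repSet, Finset.mem_union, Finset.mem_filter, Finset.mem_product, Finset.mem_Ioo,
    Finset.mem_insert, Finset.mem_singleton, Finset.mem_range] at hi
  rcases hi with ⟨⟨⟨h1, h2⟩, h3⟩, _⟩ | h | h
  · exact ⟨le_of_lt h2, h3, fun h => absurd h (by omega), fun h => absurd h (by omega)⟩
  · subst h
    exact ⟨by simp, by simp; omega, fun _ => rfl, fun hh => by simp at hh; omega⟩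
  · subst h
    exact ⟨by simp, by simp; omega, fun hh => by simp at hh; omega, fun _ => rfl⟩

lemma node_injOn (m1 m2 : ℕ) (hm1 : 0 < m1) (hm2 : 0 < m2) :
    Set.InjOn (node m1 m2) ↑(repSet m1 m2) := by
  have hm1' : (0:ℝ) < m1 := by exact_mod_cast hm1
  have hm2' : (0:ℝ) < m2 := by exact_mod_cast hm2
  intro i hi j hj hij
  obtain ⟨hi1, hi2, hi0, him⟩ := mem_repSet m1 m2 hm1 hm2 i (by exact_mod_cast hi)
  obtain ⟨hj1, hj2, hj0, hjm⟩ := mem_repSet m1 m2 hm1 hm2 j (by exact_mod_cast hj)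
  rw [node, node, Prod.ext_iff, Prod.ext_iff] at hij
  obtain ⟨hx, hy, hz⟩ := hij
  -- first coordinates are equal
  have hang : ∀ k : ℕ, k ≤ m1 → (k : ℝ) * π / m1 ∈ Set.Icc 0 π := by
    intro k hk
    constructor
    · positivity
    · rw [div_le_iff₀ hm1']
      have : (k:ℝ) ≤ m1 := by exact_mod_cast hk
      nlinarith [pi_pos]
  have h11 : i.1 = j.1 := by
    have := Real.injOn_cos (hang i.1 hi1) (hang j.1 hj1) hz
    have h2 : (i.1 : ℝ) = j.1 := by
      rw [div_left_inj' hm1'.ne'] at this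
      exact mul_right_cancel₀ pi_ne_zero this
    exact_mod_cast h2
  rcases Nat.lt_or_ge 0 i.1 with hpos | hzero
  rcases Nat.lt_or_ge i.1 m1 with hlt | hge
  · -- interior case
    have hs : 0 < Real.sin ((i.1 : ℝ) * π / m1) := by
      apply Real.sin_pos_of_pos_of_lt_pi
      · have : (0:ℝ) < i.1 := by exact_mod_cast hpos
        positivity
      · rw [div_lt_iff₀ hm1']
        have : (i.1:ℝ) < m1 := by exact_mod_cast hlt
        nlinarith [pi_pos]
    rw [← h11] at hx hy
    have hc : Real.cos ((i.2 : ℝ) * π / m2) = Real.cos ((j.2 : ℝ) * π / m2) :=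
      mul_left_cancel₀ hs.ne' hx
    have hsin : Real.sin ((i.2 : ℝ) * π / m2) = Real.sin ((j.2 : ℝ) * π / m2) :=
      mul_left_cancel₀ hs.ne' hy
    obtain ⟨n, hn⟩ := angle_eq _ _ hc hsin
    have key : (i.2:ℝ) = j.2 + n * (2 * m2) := by
      have hm2ne : (m2:ℝ) ≠ 0 := hm2'.ne'
      field_simp at hn
      have h1 : (i.2:ℝ) * π = ((j.2:ℝ) + n * (2 * m2)) * π := by rw [hn]; ring
      exact mul_right_cancel₀ pi_ne_zero h1
    have keyz : (i.2:ℤ) = j.2 + n * (2 * m2) := by exact_mod_cast key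
    have hdvd : (2 * (m2:ℤ)) ∣ ((i.2:ℤ) - j.2) := ⟨n, by linarith⟩
    have habs : |((i.2:ℤ) - (j.2:ℤ))| < 2 * (m2:ℤ) := by
      rw [abs_lt]
      omega
    have := Int.eq_zero_of_abs_lt_dvd hdvd habs
    have h22 : i.2 = j.2 := by omega
    exact Prod.ext h11 h22
  · -- i.1 = m1
    have h : i.1 = m1 := le_antisymm hi1 hge
    rw [him h, hjm (h11 ▸ h)]
  · -- i.1 = 0
    have h : i.1 = 0 := Nat.le_zero.mp hzero
    rw [hi0 h, hj0 (h11 ▸ h)]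

lemma repSet_subset (m1 m2 : ℕ) (hm1 : 0 < m1) (hm2 : 0 < m2) (heven : Even m2) :
    repSet m1 m2 ⊆ indexSet m1 m2 := by
  obtain ⟨t, ht⟩ := heven
  intro i hi
  simp only [repSet, Finset.mem_union, Finset.mem_filter, Finset.mem_product, Finset.mem_Ioo,
    Finset.mem_insert, Finset.mem_singleton, Finset.mem_range] at hi
  simp only [indexSet, Finset.mem_filter, Finset.mem_product, Finset.mem_range, Nat.even_add]
  rcases hi with ⟨⟨⟨h1, h2⟩, h3⟩, h4⟩ | h | h
  · refine ⟨⟨by omega, h3⟩, fun h => by omega, ?_⟩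
    rw [← Nat.even_add]; exact h4
  · subst h; refine ⟨⟨by omega, by omega⟩, fun _ => by omega, by simp⟩
  · subst h
    refine ⟨⟨by omega, by omega⟩, fun _ => by omega, ?_⟩
    simp only [Nat.even_iff, Nat.odd_iff]
    omega

theorem stmt6 (m1 m2 : ℕ) (hm1 : 0 < m1) (hm2 : 0 < m2) (heven : Even m2) :
    Set.ncard {x : ℝ × ℝ × ℝ | ∃ i ∈ indexSet m1 m2, x = node m1 m2 i} =
      (m1 - 1) * m2 + 2 := by
  have hset : {x : ℝ × ℝ × ℝ | ∃ i ∈ indexSet m1 m2, x = node m1 m2 i} =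
      ↑((indexSet m1 m2).image (node m1 m2)) := by
    ext x
    simp only [Set.mem_setOf_eq, Finset.coe_image, Set.mem_image, Finset.mem_coe]
    constructor
    · rintro ⟨i, hi, rfl⟩; exact ⟨i, hi, rfl⟩
    · rintro ⟨i, hi, rfl⟩; exact ⟨i, hi, rfl⟩
  have himg : (indexSet m1 m2).image (node m1 m2) = (repSet m1 m2).image (node m1 m2) := by
    apply Finset.Subset.antisymm
    · intro x hx
      simp only [Finset.mem_image] at hx ⊢
      obtain ⟨i, hi, rfl⟩ := hx
      simp only [indexSet, Finset.mem_filter, Finset.mem_product, Finset.mem_range] at hi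
      obtain ⟨⟨hi1, hi2⟩, hb, he⟩ := hi
      rcases Nat.lt_or_ge 0 i.1 with hpos | hzero
      rcases Nat.lt_or_ge i.1 m1 with hlt | hge
      · refine ⟨i, ?_, rfl⟩
        simp only [repSet, Finset.mem_union, Finset.mem_filter, Finset.mem_product,
          Finset.mem_Ioo, Finset.mem_range]
        exact Or.inl ⟨⟨⟨hpos, hlt⟩, hi2⟩, he⟩
      · -- i.1 = m1
        have h : i.1 = m1 := by omega
        refine ⟨(m1, m1 % 2), ?_, ?_⟩
        · simp [repSet]
        · have : i = (m1, i.2) := by rw [← h]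
          rw [this, node_south m1 m2 hm1, node_south m1 m2 hm1]
      · -- i.1 = 0
        have h : i.1 = 0 := by omega
        refine ⟨(0, 0), ?_, ?_⟩
        · simp [repSet]
        · have : i = (0, i.2) := by rw [← h]
          rw [this, node_north, node_north]
    · exact Finset.image_subset_image (repSet_subset m1 m2 hm1 hm2 heven)
  rw [hset, Set.ncard_coe_finset, himg,
    Finset.card_image_of_injOn (node_injOn m1 m2 hm1 hm2), repSet_card m1 m2 hm1 hm2]
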